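/- Let p ≥ 1 be an integer and let (λ_k)_{k∈ℕ} and (μ_k)_{k∈ℕ} be two nondecreasing sequences of positive real numbers tending to +∞ with Σ_k λ_k^{−p} < ∞ and Σ_k μ_k^{−p} < ∞. If Σ_k λ_k^{−n} = Σ_k μ_k^{−n} for every integer n ≥ p, then λ_k = μ_k for every k. -/

import Mathlib

private lemma stmt9_summ (p n : ℕ) (hpn : p ≤ n) (f : ℕ → ℝ)
    (hmono : Monotone f) (hpos : ∀ k, 0 < f k)
    (hs : Summable fun k => (f k)⁻¹ ^ p) :
    Summable fun k => (f k)⁻¹ ^ n := by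
  apply Summable.of_nonneg_of_le
    (fun k => pow_nonneg (inv_nonneg.2 (hpos k).le) n)
    (fun k => ?_) (hs.mul_right ((f 0)⁻¹ ^ (n - p)))
  have h1 : (f k)⁻¹ ^ n = (f k)⁻¹ ^ p * (f k)⁻¹ ^ (n - p) := by
    rw [← pow_add]; congr 1; omega
  have h2 : (f k)⁻¹ ≤ (f 0)⁻¹ := inv_anti₀ (hpos 0) (hmono (Nat.zero_le k))
  have h3 : (f k)⁻¹ ^ (n - p) ≤ (f 0)⁻¹ ^ (n - p) :=
    pow_le_pow_left₀ (inv_nonneg.2 (hpos k).le) h2 _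
  rw [h1]
  exact mul_le_mul_of_nonneg_left h3 (pow_nonneg (inv_nonneg.2 (hpos k).le) p)

set_option maxHeartbeats 1600000 in
private lemma stmt9_aux (p : ℕ) (lam mu : ℕ → ℝ)
    (hlmono : Monotone lam) (hmmono : Monotone mu)
    (hlpos : ∀ k, 0 < lam k) (hmpos : ∀ k, 0 < mu k)
    (hlsum : Summable fun k => (lam k)⁻¹ ^ p)
    (hmsum : Summable fun k => (mu k)⁻¹ ^ p)
    (heq : ∀ n : ℕ, p ≤ n → (∑' k, (lam k)⁻¹ ^ n) = ∑' k, (mu k)⁻¹ ^ n)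
    (K : ℕ) (ih : ∀ j < K, lam j = mu j) : mu K ≤ lam K := by
  by_contra hcon
  push_neg at hcon
  set a := lam K with ha
  set b := mu K with hb
  have ha0 : 0 < a := hlpos K
  have hb0 : 0 < b := hmpos K
  -- summability for each n ≥ p
  have sL : ∀ n, p ≤ n → Summable fun k => (lam k)⁻¹ ^ n :=
    fun n hn => stmt9_summ p n hn lam hlmono hlpos hlsum
  have sM : ∀ n, p ≤ n → Summable fun k => (mu k)⁻¹ ^ n :=
    fun n hn => stmt9_summ p n hn mu hmmono hmpos hmsum
  -- tail equality
  have htail : ∀ n, p ≤ n →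
      (∑' k, (lam (k + K))⁻¹ ^ n) = ∑' k, (mu (k + K))⁻¹ ^ n := by
    intro n hn
    have h1 := Summable.sum_add_tsum_nat_add K (sL n hn)
    have h2 := Summable.sum_add_tsum_nat_add K (sM n hn)
    have hfin : (∑ i ∈ Finset.range K, (lam i)⁻¹ ^ n) =
        ∑ i ∈ Finset.range K, (mu i)⁻¹ ^ n := by
      refine Finset.sum_congr rfl fun i hi => ?_
      rw [ih i (Finset.mem_range.1 hi)]
    have := heq n hn
    linarith [h1, h2]
  -- the tail p-sum for mu
  have sMtail : Summable fun k => (mu (k + K))⁻¹ ^ p :=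
    (summable_nat_add_iff K).2 hmsum
  set S : ℝ := ∑' k, (mu (k + K))⁻¹ ^ p with hS
  have hS0 : 0 ≤ S := tsum_nonneg fun k => pow_nonneg (inv_nonneg.2 (hmpos _).le) p
  set C : ℝ := a ^ p * S with hC
  have hC0 : 0 ≤ C := mul_nonneg (pow_nonneg ha0.le p) hS0
  have hr1 : a / b < 1 := (div_lt_one hb0).2 hcon
  have hr0 : 0 ≤ a / b := by positivity
  obtain ⟨m, hm⟩ := exists_pow_lt_of_lt_one
    (show (0:ℝ) < (C + 1)⁻¹ by positivity) hr1
  set n := m + p with hn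
  have hpn : p ≤ n := by omega
  -- lower bound: a⁻¹ ^ n ≤ lam tail sum
  have sLtail : Summable fun k => (lam (k + K))⁻¹ ^ n :=
    (summable_nat_add_iff K).2 (sL n hpn)
  have hlow : a⁻¹ ^ n ≤ ∑' k, (lam (k + K))⁻¹ ^ n := by
    have := Summable.le_tsum sLtail 0 (fun j _ => pow_nonneg (inv_nonneg.2 (hlpos _).le) n)
    simpa using this
  -- upper bound on mu tail sum
  have hup : (∑' k, (mu (k + K))⁻¹ ^ n) ≤ S * (b⁻¹) ^ m := by
    have hbk : ∀ k, b ≤ mu (k + K) := fun k => hmmono (Nat.le_add_left K k)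
    have hterm : ∀ k, (mu (k + K))⁻¹ ^ n ≤ (mu (k + K))⁻¹ ^ p * b⁻¹ ^ m := by
      intro k
      have h1 : (mu (k + K))⁻¹ ^ n = (mu (k + K))⁻¹ ^ p * (mu (k + K))⁻¹ ^ m := by
        rw [← pow_add]; congr 1; omega
      have h2 : (mu (k + K))⁻¹ ^ m ≤ b⁻¹ ^ m :=
        pow_le_pow_left₀ (inv_nonneg.2 (hmpos _).le) (inv_anti₀ hb0 (hbk k)) m
      rw [h1]
      exact mul_le_mul_of_nonneg_left h2 (pow_nonneg (inv_nonneg.2 (hmpos _).le) p)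
    calc (∑' k, (mu (k + K))⁻¹ ^ n)
        ≤ ∑' k, (mu (k + K))⁻¹ ^ p * b⁻¹ ^ m :=
          Summable.tsum_le_tsum hterm ((summable_nat_add_iff K).2 (sM n hpn))
            (sMtail.mul_right _)
      _ = S * b⁻¹ ^ m := tsum_mul_right
  have key : a⁻¹ ^ n ≤ S * b⁻¹ ^ m := hlow.trans ((le_of_eq (htail n hpn)).trans hup)
  -- rearrange: 1 ≤ C * (a/b)^m
  have hone : (1:ℝ) ≤ C * (a / b) ^ m := by
    have h1 : a⁻¹ ^ n * a ^ n = 1 := by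
      rw [← mul_pow, inv_mul_cancel₀ (ne_of_gt ha0)]
      exact one_pow n
    have h2 : a ^ n = a ^ m * a ^ p := by rw [hn, pow_add]
    have h3 : S * b⁻¹ ^ m * a ^ n = C * (a / b) ^ m := by
      rw [h2, hC, div_pow]
      field_simp
      rw [mul_assoc, ← mul_pow, one_div, inv_mul_cancel₀ (ne_of_gt hb0), one_pow, mul_one]
    calc (1:ℝ) = a⁻¹ ^ n * a ^ n := h1.symm
      _ ≤ S * b⁻¹ ^ m * a ^ n := by
          have : (0:ℝ) < a ^ n := by positivity
          exact mul_le_mul_of_nonneg_right key (le_of_lt this)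
      _ = C * (a / b) ^ m := h3
  have hlt : C * (a / b) ^ m < 1 := by
    calc C * (a / b) ^ m ≤ (C + 1) * (a / b) ^ m := by
          apply mul_le_mul_of_nonneg_right (by linarith) (by positivity)
      _ < (C + 1) * (C + 1)⁻¹ := by
          apply mul_lt_mul_of_pos_left hm (by positivity)
      _ = 1 := mul_inv_cancel₀ (by positivity)
  linarith

/-- Let `p ≥ 1` be an integer and `(λ_k)`, `(μ_k)` two nondecreasing sequences of
positive reals tending to `+∞` with `Σ_k λ_k^(−p) < ∞` and `Σ_k μ_k^(−p) < ∞`.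
If `Σ_k λ_k^(−n) = Σ_k μ_k^(−n)` for every integer `n ≥ p`, then `λ_k = μ_k` for every `k`. -/
theorem stmt9 (p : ℕ) (hp : 1 ≤ p) (lam mu : ℕ → ℝ)
    (hlmono : Monotone lam) (hmmono : Monotone mu)
    (hlpos : ∀ k, 0 < lam k) (hmpos : ∀ k, 0 < mu k)
    (hltend : Filter.Tendsto lam Filter.atTop Filter.atTop)
    (hmtend : Filter.Tendsto mu Filter.atTop Filter.atTop)
    (hlsum : Summable fun k => (lam k) ^ (-(p : ℤ)))
    (hmsum : Summable fun k => (mu k) ^ (-(p : ℤ)))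
    (heq : ∀ n : ℕ, p ≤ n → (∑' k, (lam k) ^ (-(n : ℤ))) = ∑' k, (mu k) ^ (-(n : ℤ))) :
    lam = mu := by
  have hz : ∀ (f : ℕ → ℝ) (n : ℕ), (fun k => (f k) ^ (-(n : ℤ))) = fun k => (f k)⁻¹ ^ n := by
    intro f n; funext k; rw [zpow_neg, zpow_natCast, inv_pow]
  have hlsum' : Summable fun k => (lam k)⁻¹ ^ p := by rw [← hz]; exact hlsum
  have hmsum' : Summable fun k => (mu k)⁻¹ ^ p := by rw [← hz]; exact hmsum
  have heq' : ∀ n : ℕ, p ≤ n → (∑' k, (lam k)⁻¹ ^ n) = ∑' k, (mu k)⁻¹ ^ n := by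
    intro n hn
    have := heq n hn
    rw [show (∑' k, (lam k) ^ (-(n : ℤ))) = ∑' k, (lam k)⁻¹ ^ n from by rw [← hz],
      show (∑' k, (mu k) ^ (-(n : ℤ))) = ∑' k, (mu k)⁻¹ ^ n from by rw [← hz]] at this
    exact this
  funext k
  induction k using Nat.strong_induction_on with
  | _ k ihk =>
    refine le_antisymm ?_ ?_
    · exact stmt9_aux p mu lam hmmono hlmono hmpos hlpos hmsum' hlsum'
        (fun n hn => (heq' n hn).symm) k (fun j hj => (ihk j hj).symm)
    · exact stmt9_aux p lam mu hlmono hmmono hlpos hmpos hlsum' hmsum'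
        heq' k ihk
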